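/- Let p be an odd prime and A a commutative polynomial ring over Z. Suppose α = Σ_{i=1}^ℓ c_i V^{0}⟨a_i⟩ = 0 in X(A) ⊆ A^ℕ, where the a_i ∈ A are nonzero, pairwise distinct, and satisfy a_i ≠ -a_j for i ≠ j, and c_i ∈ Z. Then c_i = 0 for all i. -/

import Mathlib

/-- Binomial-type lower bound: `(m+1)^(e+1) ≥ m^(e+1) + (e+1) m^e`. -/
private lemma pow_aux18 (m e : ℕ) : m ^ (e + 1) + (e + 1) * m ^ e ≤ (m + 1) ^ (e + 1) := by
  induction e with
  | zero => simp [pow_succ]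
  | succ e ih =>
    have key : (m ^ (e + 1) + (e + 1) * m ^ e) * (m + 1)
        = m ^ (e + 2) + (e + 2) * m ^ (e + 1) + (e + 1) * m ^ e := by ring
    calc m ^ (e + 2) + (e + 2) * m ^ (e + 1)
        ≤ (m ^ (e + 1) + (e + 1) * m ^ e) * (m + 1) := by omega
      _ ≤ (m + 1) ^ (e + 1) * (m + 1) := Nat.mul_le_mul_right _ ih
      _ = (m + 1) ^ (e + 2) := by ring

/-- Key arithmetic fact: for integers `y i` with `|y i| < N` on `s`, `N ≥ 2`, a relation
`d * N^e = -∑ (c i) * (y i)^e` for all `e = p^k` forces `d = 0` when ... we state the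
final numeric contradiction instead. -/
private lemma numeric_aux18 (C N e : ℕ) (hN : 2 ≤ N) (he : C * (N - 1) < e) :
    C * (N - 1) ^ e < N ^ e := by
  obtain ⟨e', rfl⟩ : ∃ e', e = e' + 1 := ⟨e - 1, by omega⟩
  obtain ⟨M, rfl⟩ : ∃ M, N = M + 1 := ⟨N - 1, by omega⟩
  have hM : 1 ≤ M := by omega
  have h1 : C * (M + 1 - 1) ^ (e' + 1) = C * M * M ^ e' := by
    simp [pow_succ]; ring
  have h2 : C * M < e' + 1 := by simpa using he
  have h3 : 0 < M ^ e' := pow_pos hM _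
  calc C * (M + 1 - 1) ^ (e' + 1) = C * M * M ^ e' := h1
    _ < (e' + 1) * M ^ e' := by exact Nat.mul_lt_mul_of_lt_of_le h2 le_rfl h3
    _ ≤ M ^ (e' + 1) + (e' + 1) * M ^ e' := Nat.le_add_left _ _
    _ ≤ (M + 1) ^ (e' + 1) := pow_aux18 M e'

theorem stmt_18 (p : ℕ) (hp : p.Prime) (hodd : p ≠ 2) (S : Type*)
    (l : ℕ) (a : Fin l → MvPolynomial S ℤ) (c : Fin l → ℤ)
    (hne : ∀ i, a i ≠ 0)
    (hdist : ∀ i j : Fin l, i ≠ j → a i ≠ a j ∧ a i ≠ -a j)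
    (hsum : ∀ k : ℕ, ∑ i, c i • (a i ^ p ^ k) = 0) :
    ∀ i, c i = 0 := by
  classical
  -- The big product of all the nonvanishing constraints
  set P : MvPolynomial S ℤ :=
    (∏ i, a i) * ∏ q ∈ Finset.univ.offDiag, ((a q.1 - a q.2) * (a q.1 + a q.2)) with hP
  have hPne : P ≠ 0 := by
    apply mul_ne_zero
    · exact Finset.prod_ne_zero_iff.2 fun i _ => hne i
    · refine Finset.prod_ne_zero_iff.2 fun q hq => ?_
      obtain ⟨-, -, hq⟩ := Finset.mem_offDiag.1 hq
      exact mul_ne_zero (sub_ne_zero.2 (hdist _ _ hq).1)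
        (by
          have := (hdist _ _ hq).2
          intro h
          exact this (by linear_combination h))
  -- find an integer point where P doesn't vanish
  have hex : ∃ x : S → ℤ, MvPolynomial.eval x P ≠ 0 := by
    by_contra hcon
    push_neg at hcon
    exact hPne (MvPolynomial.funext (q := 0) (by simpa using hcon))
  obtain ⟨x, hx⟩ := hex
  set y : Fin l → ℤ := fun i => MvPolynomial.eval x (a i) with hy
  have hevalP : MvPolynomial.eval x P =
      (∏ i, y i) * ∏ q ∈ Finset.univ.offDiag, ((y q.1 - y q.2) * (y q.1 + y q.2)) := by
    simp [hP, hy, map_mul, map_prod, map_sub, map_add]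
  rw [hevalP] at hx
  have hyne : ∀ i, y i ≠ 0 := by
    intro i hi
    apply hx
    rw [mul_eq_zero]
    exact Or.inl (Finset.prod_eq_zero (Finset.mem_univ i) hi)
  have hydist : ∀ i j, i ≠ j → y i ≠ y j ∧ y i ≠ -y j := by
    intro i j hij
    have hmem : (i, j) ∈ Finset.univ.offDiag := Finset.mem_offDiag.2 ⟨Finset.mem_univ _, Finset.mem_univ _, hij⟩
    constructor
    · intro h
      apply hx
      rw [mul_eq_zero]
      refine Or.inr (Finset.prod_eq_zero hmem ?_)
      simp [sub_eq_zero.2 h]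
    · intro h
      apply hx
      rw [mul_eq_zero]
      refine Or.inr (Finset.prod_eq_zero hmem ?_)
      have : y i + y j = 0 := by rw [h]; ring
      simp [this]
  -- the evaluated relations
  have hYsum : ∀ k : ℕ, ∑ i, c i * y i ^ p ^ k = 0 := by
    intro k
    have := congrArg (MvPolynomial.eval x) (hsum k)
    simpa [map_sum, zsmul_eq_mul, map_mul, map_pow, hy] using this
  -- restrict to support
  set T : Finset (Fin l) := Finset.univ.filter (fun i => c i ≠ 0) with hT
  have hTsum : ∀ k : ℕ, ∑ i ∈ T, c i * y i ^ p ^ k = 0 := by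
    intro k
    rw [← hYsum k]
    apply Finset.sum_filter_of_ne
    intro i _ h hc
    exact h (by rw [hc, zero_mul])
  -- suppose some coefficient nonzero
  intro i0
  by_contra h0
  have hTne : T.Nonempty := ⟨i0, Finset.mem_filter.2 ⟨Finset.mem_univ _, h0⟩⟩
  obtain ⟨i1, hi1T, hi1max⟩ := T.exists_max_image (fun i => |y i|) hTne
  have hci1 : c i1 ≠ 0 := (Finset.mem_filter.1 hi1T).2
  have hrel : ∀ k : ℕ, c i1 * y i1 ^ p ^ k = -∑ i ∈ T.erase i1, c i * y i ^ p ^ k := by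
    intro k
    have := hTsum k
    rw [← Finset.add_sum_erase T _ hi1T] at this
    linarith
  rcases Finset.eq_empty_or_nonempty (T.erase i1) with hE | hE
  · -- single term: c i1 * y i1 ^ 1 = 0, contradiction
    have := hrel 0
    rw [hE] at this
    simp at this
    rcases this with h | h
    · exact hci1 h
    · exact hyne i1 h
  · obtain ⟨j, hjE⟩ := hE
    have hjT := Finset.mem_of_mem_erase hjE
    have hjne : j ≠ i1 := Finset.ne_of_mem_erase hjE
    -- set up natAbs quantities
    set N : ℕ := (y i1).natAbs with hN
    have hlt : ∀ i ∈ T.erase i1, (y i).natAbs < N := by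
      intro i hiE
      have hiT := Finset.mem_of_mem_erase hiE
      have hine : i ≠ i1 := Finset.ne_of_mem_erase hiE
      have hle : |y i| ≤ |y i1| := hi1max i hiT
      have hneq : (y i).natAbs ≠ (y i1).natAbs := by
        intro h
        rcases Int.natAbs_eq_natAbs_iff.1 h with h' | h'
        · exact (hydist i i1 hine).1 h'
        · exact (hydist i i1 hine).2 h'
      have : (y i).natAbs ≤ (y i1).natAbs := by
        rwa [Int.abs_eq_natAbs, Int.abs_eq_natAbs, Int.ofNat_le] at hle
      omega
    have hN2 : 2 ≤ N := by
      have h1 : 1 ≤ (y j).natAbs := Int.one_le_abs (hyne j) |>.trans_eq (Int.abs_eq_natAbs _) |> fun h => by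
        exact_mod_cast h
      have := hlt j hjE
      omega
    set C : ℕ := ∑ i ∈ T.erase i1, (c i).natAbs with hC
    -- choose the exponent
    set k : ℕ := C * (N - 1) + 1 with hk
    set e : ℕ := p ^ k with he
    have heC : C * (N - 1) < e := by
      have h2 : 2 ^ k ≤ p ^ k := Nat.pow_le_pow_left hp.two_le k
      have h3 : k < 2 ^ k := k.lt_two_pow_self
      omega
    -- the bound
    have hbound : (N : ℤ) ^ e ≤ (C : ℤ) * ((N : ℤ) - 1) ^ e := by
      have h1 : |c i1 * y i1 ^ e| ≤ ∑ i ∈ T.erase i1, |c i * y i ^ e| := by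
        rw [hrel k, abs_neg]
        exact Finset.abs_sum_le_sum_abs _ _
      have h2 : (N : ℤ) ^ e ≤ |c i1 * y i1 ^ e| := by
        rw [abs_mul, abs_pow]
        have : (N : ℤ) = |y i1| := (Int.abs_eq_natAbs _).symm
        rw [← this]
        have hc1 : 1 ≤ |c i1| := Int.one_le_abs hci1
        nlinarith [pow_nonneg (Int.natCast_nonneg N) e]
      have h3 : ∑ i ∈ T.erase i1, |c i * y i ^ e| ≤ (C : ℤ) * ((N : ℤ) - 1) ^ e := by
        rw [hC]
        push_cast
        rw [Finset.sum_mul]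
        apply Finset.sum_le_sum
        intro i hiE
        have hyb : |y i| ≤ (N : ℤ) - 1 := by
          have := hlt i hiE
          rw [Int.abs_eq_natAbs]
          omega
        have hpow : |y i| ^ e ≤ ((N : ℤ) - 1) ^ e :=
          pow_le_pow_left₀ (abs_nonneg _) hyb e
        have h4 : |c i| = ((c i).natAbs : ℤ) := Int.abs_eq_natAbs _
        rw [abs_mul, abs_pow, h4]
        exact mul_le_mul_of_nonneg_left hpow (by positivity)
      linarith
    -- contradiction with numeric_aux18
    have hnum := numeric_aux18 C N e hN2 heC
    have hcast : (C : ℤ) * ((N : ℤ) - 1) ^ e = ((C * (N - 1) ^ e : ℕ) : ℤ) := by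
      push_cast [Nat.cast_sub (by omega : 1 ≤ N)]
      ring
    rw [hcast] at hbound
    have : (N : ℤ) ^ e = ((N ^ e : ℕ) : ℤ) := by push_cast; ring
    rw [this] at hbound
    have : N ^ e ≤ C * (N - 1) ^ e := by exact_mod_cast hbound
    omega
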